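/- Ordering of GMM solutions under three weighting schemes (simplified case): Let $\mathcal{L}(\Theta; w) = \sum_{i=1}^{N} w_i \log\sum_{k=1}^K \pi_k\mathcal{N}(e_i;\mu_k,\Sigma_k) + \sum_{i=N+1}^{N+N_s} w_i\log\sum_{k=1}^K\pi_k\mathcal{N}(e_i;\mu_k,\Sigma_k)$ where $\Theta=(\pi,\{\mu_k,\Sigma_k\})$. Consider the identical weights $w_i = 1/(N+N_s)$, ground-truth weights ($w_i=1/N$ for $i\le N$ and $0$ otherwise), and attention weights ($w_i=\lambda_1\in[1/(N+N_s),1/N]$ for $i\le N$, $w_i=\lambda_2\in(0,1/(N+N_s)]$ for $i>N$, with $N\lambda_1+N_s\lambda_2=1$). Let $\Theta_I, \Theta_G, \Theta_A$ be maximizers of $\mathcal{L}$ under each scheme respectively (assumed to exist). Then $\mathcal{L}(\Theta_I; w\!\to\!\mathrm{GT}) \le \mathcal{L}(\Theta_A; w\!\to\!\mathrm{GT}) \le \mathcal{L}(\Theta_G; w\!\to\!\mathrm{GT})$. -/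

import Mathlib

open Matrix

/-- Multivariate Gaussian density. -/
noncomputable def gaussPdf (d : ℕ) (mu : Fin d → ℝ)
    (S : Matrix (Fin d) (Fin d) ℝ) (x : Fin d → ℝ) : ℝ :=
  Real.exp (-(1 / 2) * ((x - mu) ⬝ᵥ (S⁻¹ *ᵥ (x - mu)))) /
    ((2 * Real.pi) ^ ((d : ℝ) / 2) * Real.sqrt S.det)

/-- Parameters of a `K`-component Gaussian mixture model in `ℝ^d`. -/
structure GMMParams (d K : ℕ) where
  pi' : Fin K → ℝ
  mu : Fin K → Fin d → ℝ
  cov : Fin K → Matrix (Fin d) (Fin d) ℝ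

/-- Valid GMM parameters: mixing proportions form a distribution and the
covariances are positive definite. -/
def GMMParams.Valid {d K : ℕ} (Θ : GMMParams d K) : Prop :=
  (∀ k, 0 ≤ Θ.pi' k) ∧ (∑ k, Θ.pi' k = 1) ∧ (∀ k, (Θ.cov k).PosDef)

/-- Mixture log-likelihood of one data point. -/
noncomputable def mixLogLik {d K : ℕ} (Θ : GMMParams d K) (x : Fin d → ℝ) : ℝ :=
  Real.log (∑ k, Θ.pi' k * gaussPdf d (Θ.mu k) (Θ.cov k) x)

/-- Weighted GMM log-likelihood with per-group weights `w1` (non-stop-words)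
and `w2` (stop-words). -/
noncomputable def gmmObj {d K N Ns : ℕ} (e1 : Fin N → Fin d → ℝ)
    (e2 : Fin Ns → Fin d → ℝ) (w1 w2 : ℝ) (Θ : GMMParams d K) : ℝ :=
  w1 * ∑ i, mixLogLik Θ (e1 i) + w2 * ∑ i, mixLogLik Θ (e2 i)

lemma quad_nonneg {d : ℕ} {P : Matrix (Fin d) (Fin d) ℝ} (hP : P.PosDef)
    (v : Fin d → ℝ) : 0 ≤ v ⬝ᵥ P *ᵥ v := by
  rcases eq_or_ne v 0 with h | h
  · simp [h]
  · have := hP.dotProduct_mulVec_pos h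
    simpa [star_trivial] using this.le

lemma quad_pos {d : ℕ} {P : Matrix (Fin d) (Fin d) ℝ} (hP : P.PosDef)
    {v : Fin d → ℝ} (hv : v ≠ 0) : 0 < v ⬝ᵥ P *ᵥ v := by
  have := hP.dotProduct_mulVec_pos hv
  simpa [star_trivial] using this

lemma dot_symm {d : ℕ} {P : Matrix (Fin d) (Fin d) ℝ} (hP : P.IsHermitian)
    (x y : Fin d → ℝ) : x ⬝ᵥ P *ᵥ y = y ⬝ᵥ P *ᵥ x := by
  have hPt : Pᵀ = P := by
    have := hP.eq
    simpa [Matrix.conjTranspose_eq_transpose_of_trivial] using this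
  rw [dotProduct_mulVec, ← hPt, vecMul_transpose, hPt, dotProduct_comm]

lemma denom_pos {d : ℕ} {S : Matrix (Fin d) (Fin d) ℝ} (hS : S.PosDef) :
    0 < (2 * Real.pi) ^ ((d : ℝ) / 2) * Real.sqrt S.det := by
  have h2 : (0:ℝ) < 2 * Real.pi := by positivity
  exact mul_pos (Real.rpow_pos_of_pos h2 _) (Real.sqrt_pos.mpr hS.det_pos)

lemma gaussPdf_pos {d : ℕ} {mu : Fin d → ℝ} {S : Matrix (Fin d) (Fin d) ℝ}
    (hS : S.PosDef) (x : Fin d → ℝ) : 0 < gaussPdf d mu S x :=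
  div_pos (Real.exp_pos _) (denom_pos hS)

lemma log_gaussPdf {d : ℕ} {mu : Fin d → ℝ} {S : Matrix (Fin d) (Fin d) ℝ}
    (hS : S.PosDef) (x : Fin d → ℝ) :
    Real.log (gaussPdf d mu S x) =
      -(1/2) * ((x - mu) ⬝ᵥ (S⁻¹ *ᵥ (x - mu)))
        - ((d:ℝ)/2) * Real.log (2 * Real.pi) - (1/2) * Real.log S.det := by
  have h2 : (0:ℝ) < 2 * Real.pi := by positivity
  rw [gaussPdf, Real.log_div (Real.exp_ne_zero _) (denom_pos hS).ne',
    Real.log_exp, Real.log_mul (Real.rpow_pos_of_pos h2 _).ne'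
      (Real.sqrt_pos.mpr hS.det_pos).ne',
    Real.log_rpow h2, Real.log_sqrt hS.det_pos.le]
  ring

section Quad
variable {d : ℕ} {P : Matrix (Fin d) (Fin d) ℝ}

lemma inv_mulVec_self (hP : P.PosDef) (v : Fin d → ℝ) :
    P *ᵥ (P⁻¹ *ᵥ v) = v := by
  rw [mulVec_mulVec, mul_nonsing_inv _ (hP.det_pos.ne'.isUnit), one_mulVec]

lemma self_mulVec_inv (hP : P.PosDef) (v : Fin d → ℝ) :
    P⁻¹ *ᵥ (P *ᵥ v) = v := by
  rw [mulVec_mulVec, nonsing_inv_mul _ (hP.det_pos.ne'.isUnit), one_mulVec]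

/-- expansion: for `z = y - P⁻¹ b`, `z ⬝ᵥ P z = y P y - 2 b⬝y + b P⁻¹ b`. -/
lemma quad_expand (hP : P.PosDef) (b y : Fin d → ℝ) :
    (y - P⁻¹ *ᵥ b) ⬝ᵥ P *ᵥ (y - P⁻¹ *ᵥ b)
      = y ⬝ᵥ P *ᵥ y - 2 * (b ⬝ᵥ y) + b ⬝ᵥ P⁻¹ *ᵥ b := by
  set w := P⁻¹ *ᵥ b with hw
  have hPw : P *ᵥ w = b := inv_mulVec_self hP b
  have h1 : (y - w) ⬝ᵥ P *ᵥ (y - w)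
      = y ⬝ᵥ P *ᵥ y - y ⬝ᵥ P *ᵥ w - w ⬝ᵥ P *ᵥ y + w ⬝ᵥ P *ᵥ w := by
    rw [mulVec_sub, sub_dotProduct, dotProduct_sub, dotProduct_sub]
    ring
  rw [h1, hPw, dot_symm hP.isHermitian w y, hPw]
  have : y ⬝ᵥ b = b ⬝ᵥ y := dotProduct_comm _ _
  have hwb : w ⬝ᵥ b = b ⬝ᵥ w := dotProduct_comm _ _
  rw [this, hwb]
  ring

lemma quad_max (hP : P.PosDef) (b y : Fin d → ℝ) :
    2 * (b ⬝ᵥ y) - y ⬝ᵥ P *ᵥ y ≤ b ⬝ᵥ P⁻¹ *ᵥ b := by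
  have h := quad_nonneg hP (y - P⁻¹ *ᵥ b)
  rw [quad_expand hP b y] at h
  linarith

lemma quad_max_strict (hP : P.PosDef) (b y : Fin d → ℝ) (hy : y ≠ P⁻¹ *ᵥ b) :
    2 * (b ⬝ᵥ y) - y ⬝ᵥ P *ᵥ y < b ⬝ᵥ P⁻¹ *ᵥ b := by
  have h := quad_pos hP (sub_ne_zero.mpr hy)
  rw [quad_expand hP b y] at h
  linarith

end Quad

section Spectral
variable {d : ℕ} {M : Matrix (Fin d) (Fin d) ℝ}

lemma det_unitary_conj (U : Matrix.unitaryGroup (Fin d) ℝ)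
    (X : Matrix (Fin d) (Fin d) ℝ) :
    det ((U : Matrix (Fin d) (Fin d) ℝ) * X * (star U : Matrix (Fin d) (Fin d) ℝ)) = det X := by
  rw [det_mul, det_mul]
  have h1 : det ((U : Matrix (Fin d) (Fin d) ℝ)) * det ((star U : Matrix (Fin d) (Fin d) ℝ))
      = 1 := by
    rw [← det_mul, Matrix.mem_unitaryGroup_iff.mp U.2, det_one]
  linear_combination X.det * h1

lemma half_one_add_conj (hM : M.IsHermitian) :
    (2⁻¹ : ℝ) • (1 + M) =
      (hM.eigenvectorUnitary : Matrix (Fin d) (Fin d) ℝ) *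
        diagonal (fun i => (1 + hM.eigenvalues i) / 2) *
        (star hM.eigenvectorUnitary : Matrix (Fin d) (Fin d) ℝ) := by
  set U := (hM.eigenvectorUnitary : Matrix (Fin d) (Fin d) ℝ) with hU
  have hUU : U * star U = 1 := Matrix.mem_unitaryGroup_iff.mp hM.eigenvectorUnitary.2
  have hone : (1 : Matrix (Fin d) (Fin d) ℝ) = U * 1 * star U := by
    rw [mul_one, hUU]
  have hspec : M = U * diagonal (RCLike.ofReal ∘ hM.eigenvalues) * star U :=
    hM.spectral_theorem
  have hdiag : diagonal (RCLike.ofReal ∘ hM.eigenvalues) = diagonal hM.eigenvalues := by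
    simp [RCLike.ofReal_real_eq_id]
  calc (2⁻¹ : ℝ) • (1 + M)
      = (2⁻¹ : ℝ) • (U * 1 * star U + U * diagonal hM.eigenvalues * star U) := by
        rw [← hdiag, ← hspec, ← hone]
    _ = U * ((2⁻¹ : ℝ) • (1 + diagonal hM.eigenvalues)) * star U := by
        rw [← add_mul, ← mul_add, Matrix.mul_smul, Matrix.smul_mul]
    _ = U * diagonal (fun i => (1 + hM.eigenvalues i) / 2) * star U := by
        congr 1
        congr 1
        ext i j
        simp only [Matrix.smul_apply, Matrix.add_apply, Matrix.one_apply,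
          Matrix.diagonal_apply, smul_eq_mul]
        split_ifs <;> ring

lemma det_half_one_add (hM : M.IsHermitian) :
    det ((2⁻¹ : ℝ) • (1 + M)) = ∏ i, ((1 + hM.eigenvalues i) / 2) := by
  rw [half_one_add_conj hM, det_unitary_conj hM.eigenvectorUnitary, det_diagonal]

lemma det_eq_prod_eigen (hM : M.IsHermitian) :
    det M = ∏ i, hM.eigenvalues i := by
  have := hM.det_eq_prod_eigenvalues
  simpa [RCLike.ofReal_real_eq_id] using this

lemma eq_one_of_eigen_one (hM : M.IsHermitian)
    (h : ∀ i, hM.eigenvalues i = 1) : M = 1 := by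
  have hspec := hM.spectral_theorem
  have hdiag : diagonal (RCLike.ofReal ∘ hM.eigenvalues)
      = (1 : Matrix (Fin d) (Fin d) ℝ) := by
    ext i j
    simp [h, Matrix.diagonal_apply, Matrix.one_apply, RCLike.ofReal_real_eq_id]
  rw [hspec, Unitary.conjStarAlgAut_apply, hdiag, mul_one, Matrix.mem_unitaryGroup_iff.mp hM.eigenvectorUnitary.2]

end Spectral

lemma log_amgm {l : ℝ} (hl : 0 < l) : (1/2) * Real.log l ≤ Real.log ((1 + l) / 2) := by
  have hs := Real.sqrt_nonneg l
  have hsq := Real.sq_sqrt hl.le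
  have hsp : 0 < Real.sqrt l := Real.sqrt_pos.mpr hl
  have h1 : Real.sqrt l ≤ (1 + l) / 2 := by nlinarith [sq_nonneg (1 - Real.sqrt l)]
  calc (1/2) * Real.log l = Real.log (Real.sqrt l) := by
        rw [Real.log_sqrt hl.le]; ring
    _ ≤ Real.log ((1 + l) / 2) := Real.log_le_log hsp h1

lemma log_amgm_strict {l : ℝ} (hl : 0 < l) (hne : l ≠ 1) :
    (1/2) * Real.log l < Real.log ((1 + l) / 2) := by
  have hsq := Real.sq_sqrt hl.le
  have hsp : 0 < Real.sqrt l := Real.sqrt_pos.mpr hl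
  have hsne : Real.sqrt l ≠ 1 := by
    intro h
    apply hne
    rw [← hsq, h]; norm_num
  have h1 : Real.sqrt l < (1 + l) / 2 := by
    rcases lt_or_gt_of_ne hsne with h | h <;> nlinarith [sq_nonneg (1 - Real.sqrt l)]
  calc (1/2) * Real.log l = Real.log (Real.sqrt l) := by
        rw [Real.log_sqrt hl.le]; ring
    _ < Real.log ((1 + l) / 2) := Real.log_lt_log hsp h1

open scoped MatrixOrder in
lemma logdet_mid {d : ℕ} {P Q : Matrix (Fin d) (Fin d) ℝ}
    (hP : P.PosDef) (hQ : Q.PosDef) (hne : P ≠ Q) :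
    (1/2) * Real.log P.det + (1/2) * Real.log Q.det
      < Real.log (((2⁻¹ : ℝ) • (P + Q)).det) := by
  set R := CFC.sqrt P with hRdef
  have hRR : R * R = P := CFC.sqrt_mul_sqrt_self P hP.posSemidef.nonneg
  have hRh : R.IsHermitian := (CFC.sqrt_nonneg P).posSemidef.isHermitian
  have hdetR : R.det * R.det = P.det := by rw [← det_mul, hRR]
  have hdetRne : R.det ≠ 0 := by
    intro h
    rw [h, mul_zero] at hdetR
    exact hP.det_pos.ne' hdetR.symm
  have hRu : IsUnit R.det := hdetRne.isUnit
  have hRinvh : R⁻¹.IsHermitian := hRh.inv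
  set M := R⁻¹ * Q * R⁻¹ with hMdef
  have hMh : M.IsHermitian := by
    unfold M
    unfold Matrix.IsHermitian
    rw [conjTranspose_mul, conjTranspose_mul, hRinvh.eq, hQ.isHermitian.eq]
    rw [mul_assoc]
  have hMpd : M.PosDef := by
    refine Matrix.PosDef.of_dotProduct_mulVec_pos hMh fun x hx => ?_
    have hv : R⁻¹ *ᵥ x ≠ 0 := by
      intro h
      apply hx
      have : R *ᵥ (R⁻¹ *ᵥ x) = x := by
        rw [mulVec_mulVec, mul_nonsing_inv _ hRu, one_mulVec]
      rw [← this, h, mulVec_zero]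
    have hcalc : x ⬝ᵥ M *ᵥ x = (R⁻¹ *ᵥ x) ⬝ᵥ Q *ᵥ (R⁻¹ *ᵥ x) := by
      unfold M
      rw [← mulVec_mulVec, ← mulVec_mulVec]
      rw [dot_symm hRinvh x (Q *ᵥ (R⁻¹ *ᵥ x)), dotProduct_comm]
    have := hQ.dotProduct_mulVec_pos hv
    simp only [star_trivial] at this hx ⊢
    rw [hcalc]
    exact this
  have hQRMR : R * M * R = Q := by
    unfold M
    rw [← mul_assoc, ← mul_assoc, mul_nonsing_inv _ hRu, one_mul,
      mul_assoc, nonsing_inv_mul _ hRu, mul_one]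
  have hMne1 : M ≠ 1 := by
    intro h
    apply hne
    rw [← hRR, ← hQRMR, h, mul_one]
  have hkey : (2⁻¹ : ℝ) • (P + Q) = R * ((2⁻¹ : ℝ) • (1 + M)) * R := by
    rw [Matrix.mul_smul, Matrix.smul_mul]
    congr 1
    rw [mul_add, add_mul, mul_one, hRR, hQRMR]
  have hdet1 : ((2⁻¹ : ℝ) • (P + Q)).det = P.det * ((2⁻¹ : ℝ) • (1 + M)).det := by
    rw [hkey, det_mul, det_mul, ← hdetR]; ring
  have hdets : ((2⁻¹ : ℝ) • (1 + M)).det = ∏ i, ((1 + hMh.eigenvalues i) / 2) :=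
    det_half_one_add hMh
  have hdetM : M.det = ∏ i, hMh.eigenvalues i := det_eq_prod_eigen hMh
  have heigpos : ∀ i, 0 < hMh.eigenvalues i := fun i => by
    have := hMpd.eigenvalues_pos i
    convert this using 2
  have hdetMQ : M.det = Q.det * P.det⁻¹ := by
    unfold M
    rw [det_mul, det_mul, det_nonsing_inv, ← hdetR]
    rw [Ring.inverse_eq_inv']
    field_simp
  -- log of the product
  have hlogprod : Real.log (((2⁻¹ : ℝ) • (1 + M)).det)
      = ∑ i, Real.log ((1 + hMh.eigenvalues i) / 2) := by
    rw [hdets, Real.log_prod]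
    intro i _
    have := heigpos i
    positivity
  have hlogdetM : Real.log M.det = ∑ i, Real.log (hMh.eigenvalues i) := by
    rw [hdetM, Real.log_prod]
    intro i _
    exact (heigpos i).ne'
  have hex : ∃ i, hMh.eigenvalues i ≠ 1 := by
    by_contra h
    push_neg at h
    exact hMne1 (eq_one_of_eigen_one hMh h)
  obtain ⟨j, hj⟩ := hex
  have hsum : ∑ i, (1/2) * Real.log (hMh.eigenvalues i)
      < ∑ i, Real.log ((1 + hMh.eigenvalues i) / 2) := by
    apply Finset.sum_lt_sum (fun i _ => log_amgm (heigpos i))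
    exact ⟨j, Finset.mem_univ j, log_amgm_strict (heigpos j) hj⟩
  have hfin : Real.log (((2⁻¹ : ℝ) • (P + Q)).det)
      = Real.log P.det + Real.log (((2⁻¹ : ℝ) • (1 + M)).det) := by
    rw [hdet1, Real.log_mul hP.det_pos.ne']
    rw [hdets]
    apply ne_of_gt
    apply Finset.prod_pos
    intro i _
    have := heigpos i
    positivity
  have hlogM : Real.log M.det = Real.log Q.det - Real.log P.det := by
    rw [hdetMQ, Real.log_mul hQ.det_pos.ne' (inv_ne_zero hP.det_pos.ne'),
      Real.log_inv]
    ring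
  have h12 : (1/2) * Real.log M.det = ∑ i, (1/2) * Real.log (hMh.eigenvalues i) := by
    rw [hlogdetM, Finset.mul_sum]
  rw [hfin, hlogprod]
  have : (1/2) * Real.log M.det < ∑ i, Real.log ((1 + hMh.eigenvalues i) / 2) := by
    rw [h12]; exact hsum
  rw [hlogM] at this
  linarith


section K1

variable {d : ℕ}

noncomputable def psiF (d : ℕ) (P : Matrix (Fin d) (Fin d) ℝ) (b : Fin d → ℝ) : ℝ :=
  (1/2) * (b ⬝ᵥ P⁻¹ *ᵥ b) - (1/2) * Real.log P.det + ((d:ℝ)/2) * Real.log (2 * Real.pi)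

noncomputable def llF (d : ℕ) (P : Matrix (Fin d) (Fin d) ℝ) (b : Fin d → ℝ)
    (x : Fin d → ℝ) : ℝ :=
  -(1/2) * (x ⬝ᵥ P *ᵥ x) + b ⬝ᵥ x - psiF d P b

lemma log_gaussPdf_canon {mu : Fin d → ℝ} {S : Matrix (Fin d) (Fin d) ℝ}
    (hS : S.PosDef) (x : Fin d → ℝ) :
    Real.log (gaussPdf d mu S x) = llF d S⁻¹ (S⁻¹ *ᵥ mu) x := by
  have hPpd : (S⁻¹).PosDef := hS.inv
  have hinv : S⁻¹⁻¹ = S := nonsing_inv_nonsing_inv S hS.det_pos.ne'.isUnit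
  have hmu : S⁻¹⁻¹ *ᵥ (S⁻¹ *ᵥ mu) = mu := by
    rw [hinv]
    exact inv_mulVec_self hS mu
  have hdet : Real.log (S⁻¹).det = - Real.log S.det := by
    rw [det_nonsing_inv, Ring.inverse_eq_inv', Real.log_inv]
  have hexp : (x - mu) ⬝ᵥ S⁻¹ *ᵥ (x - mu)
      = x ⬝ᵥ S⁻¹ *ᵥ x - 2 * ((S⁻¹ *ᵥ mu) ⬝ᵥ x) + (S⁻¹ *ᵥ mu) ⬝ᵥ S⁻¹⁻¹ *ᵥ (S⁻¹ *ᵥ mu) := by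
    rw [hmu]
    have h1 : (x - mu) ⬝ᵥ S⁻¹ *ᵥ (x - mu)
        = x ⬝ᵥ S⁻¹ *ᵥ x - x ⬝ᵥ S⁻¹ *ᵥ mu - mu ⬝ᵥ S⁻¹ *ᵥ x + mu ⬝ᵥ S⁻¹ *ᵥ mu := by
      rw [mulVec_sub, sub_dotProduct, dotProduct_sub, dotProduct_sub]
      ring
    rw [h1, dot_symm hPpd.isHermitian mu x]
    have h2 : (S⁻¹ *ᵥ mu) ⬝ᵥ x = x ⬝ᵥ S⁻¹ *ᵥ mu := dotProduct_comm _ _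
    have h3 : (S⁻¹ *ᵥ mu) ⬝ᵥ mu = mu ⬝ᵥ S⁻¹ *ᵥ mu := dotProduct_comm _ _
    rw [h2, h3]
    ring
  rw [log_gaussPdf hS, llF, psiF, hexp, hdet]
  ring

lemma mixLogLik_one {Θ : GMMParams d 1} (hV : Θ.Valid) (x : Fin d → ℝ) :
    mixLogLik Θ x = llF d (Θ.cov 0)⁻¹ ((Θ.cov 0)⁻¹ *ᵥ Θ.mu 0) x := by
  have hpi : Θ.pi' 0 = 1 := by
    have := hV.2.1
    rwa [Fin.sum_univ_one] at this
  rw [mixLogLik, Fin.sum_univ_one, hpi, one_mul, log_gaussPdf_canon (hV.2.2 0)]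

lemma posDef_half {A : Matrix (Fin d) (Fin d) ℝ} (hA : A.PosDef) :
    ((2⁻¹ : ℝ) • A).PosDef := by
  refine Matrix.PosDef.of_dotProduct_mulVec_pos ?_ ?_
  · have := hA.isHermitian.eq
    simp only [Matrix.IsHermitian, conjTranspose_smul]
    rw [this]
    congr 1
  · intro x hx
    rw [smul_mulVec, dotProduct_smul]
    have := hA.dotProduct_mulVec_pos hx
    simp only [star_trivial, smul_eq_mul] at this ⊢
    positivity

lemma quad_mid (P P' : Matrix (Fin d) (Fin d) ℝ) (x : Fin d → ℝ) :
    x ⬝ᵥ ((2⁻¹ : ℝ) • (P + P')) *ᵥ x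
      = (1/2) * (x ⬝ᵥ P *ᵥ x) + (1/2) * (x ⬝ᵥ P' *ᵥ x) := by
  rw [smul_mulVec, add_mulVec, dotProduct_smul, dotProduct_add]
  simp only [smul_eq_mul]
  ring

lemma dot_mid (b b' x : Fin d → ℝ) :
    ((2⁻¹ : ℝ) • (b + b')) ⬝ᵥ x = (1/2) * (b ⬝ᵥ x) + (1/2) * (b' ⬝ᵥ x) := by
  rw [smul_dotProduct, add_dotProduct]
  simp only [smul_eq_mul]
  ring

lemma psi_mid {P P' : Matrix (Fin d) (Fin d) ℝ} {b b' : Fin d → ℝ}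
    (hP : P.PosDef) (hP' : P'.PosDef) (hne : ¬(P = P' ∧ b = b')) :
    psiF d ((2⁻¹ : ℝ) • (P + P')) ((2⁻¹ : ℝ) • (b + b'))
      < (1/2) * psiF d P b + (1/2) * psiF d P' b' := by
  set Pm := (2⁻¹ : ℝ) • (P + P') with hPmdef
  set bm := (2⁻¹ : ℝ) • (b + b') with hbmdef
  have hPm : Pm.PosDef := posDef_half (hP.add hP')
  set y := Pm⁻¹ *ᵥ bm with hydef
  have hbm : bm ⬝ᵥ Pm⁻¹ *ᵥ bm = 2 * (bm ⬝ᵥ y) - y ⬝ᵥ Pm *ᵥ y := by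
    have h0 := quad_expand hPm bm y
    rw [← hydef, sub_self, zero_dotProduct] at h0
    linarith
  have hsplit : 2 * (bm ⬝ᵥ y) - y ⬝ᵥ Pm *ᵥ y
      = (1/2) * (2 * (b ⬝ᵥ y) - y ⬝ᵥ P *ᵥ y)
        + (1/2) * (2 * (b' ⬝ᵥ y) - y ⬝ᵥ P' *ᵥ y) := by
    rw [hbmdef, hPmdef, quad_mid, dot_mid]
    ring
  by_cases hPP : P = P'
  · subst hPP
    have hbne : b ≠ b' := by
      intro h
      exact hne ⟨rfl, h⟩
    have hPmP : Pm = P := by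
      rw [hPmdef]
      ext i j
      simp only [Matrix.smul_apply, Matrix.add_apply, smul_eq_mul]
      ring
    have hyne : y ≠ P⁻¹ *ᵥ b ∨ y ≠ P⁻¹ *ᵥ b' := by
      by_contra h
      push_neg at h
      apply hbne
      have h1 : P *ᵥ y = b := by rw [h.1, inv_mulVec_self hP]
      have h2 : P *ᵥ y = b' := by rw [h.2, inv_mulVec_self hP]
      rw [← h1, h2]
    have hq : bm ⬝ᵥ Pm⁻¹ *ᵥ bm
        < (1/2) * (b ⬝ᵥ P⁻¹ *ᵥ b) + (1/2) * (b' ⬝ᵥ P⁻¹ *ᵥ b') := by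
      rw [hbm, hsplit]
      rcases hyne with h | h
      · have hs := quad_max_strict hP b y h
        have hw := quad_max hP b' y
        linarith
      · have hs := quad_max_strict hP b' y h
        have hw := quad_max hP b y
        linarith
    rw [hPmP] at hq
    rw [psiF, psiF, psiF, hPmP]
    linarith [hq]
  · have hld := logdet_mid hP hP' hPP
    have hq1 := quad_max hP b y
    have hq2 := quad_max hP' b' y
    rw [psiF, psiF, psiF, hbm, hsplit]
    rw [← hPmdef] at hld
    linarith

end K1

lemma k1_key {d N Ns : ℕ} (c : ℝ) (hc : 0 < c) (hNNs : 0 < N + Ns)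
    (e1 : Fin N → Fin d → ℝ) (e2 : Fin Ns → Fin d → ℝ)
    (TI TA : GMMParams d 1) (hVI : TI.Valid) (hVA : TA.Valid)
    (hI : ∀ Θ : GMMParams d 1, Θ.Valid → gmmObj e1 e2 c c Θ ≤ gmmObj e1 e2 c c TI)
    (hA : gmmObj e1 e2 c c TI ≤ gmmObj e1 e2 c c TA) :
    ∀ x, mixLogLik TI x = mixLogLik TA x := by
  classical
  set P := (TI.cov 0)⁻¹ with hPdef
  set b := P *ᵥ TI.mu 0 with hbdef
  set P' := (TA.cov 0)⁻¹ with hP'def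
  set b' := P' *ᵥ TA.mu 0 with hb'def
  have hP : P.PosDef := (hVI.2.2 0).inv
  have hP' : P'.PosDef := (hVA.2.2 0).inv
  -- per point log-likelihoods
  have hmlI : ∀ x, mixLogLik TI x = llF d P b x := fun x => mixLogLik_one hVI x
  have hmlA : ∀ x, mixLogLik TA x = llF d P' b' x := fun x => mixLogLik_one hVA x
  by_cases hPP : P = P' ∧ b = b'
  · intro x
    rw [hmlI, hmlA, hPP.1, hPP.2]
  · exfalso
    -- midpoint parameters
    set Pm := (2⁻¹ : ℝ) • (P + P') with hPmdef
    set bm := (2⁻¹ : ℝ) • (b + b') with hbmdef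
    have hPm : Pm.PosDef := posDef_half (hP.add hP')
    have hPmu : IsUnit Pm.det := hPm.det_pos.ne'.isUnit
    set Tm : GMMParams d 1 := ⟨fun _ => 1, fun _ => Pm⁻¹ *ᵥ bm, fun _ => Pm⁻¹⟩ with hTmdef
    have hVm : Tm.Valid := by
      refine ⟨fun k => by norm_num, by simp [hTmdef, Fin.sum_univ_one], fun k => hPm.inv⟩
    have hinvinv : Pm⁻¹⁻¹ = Pm := nonsing_inv_nonsing_inv Pm hPmu
    have hmlM : ∀ x, mixLogLik Tm x = llF d Pm bm x := by
      intro x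
      rw [mixLogLik_one hVm x]
      show llF d (Pm⁻¹)⁻¹ ((Pm⁻¹)⁻¹ *ᵥ (Pm⁻¹ *ᵥ bm)) x = _
      rw [hinvinv, inv_mulVec_self hPm]
    -- the strict convexity gap
    have hpsig := psi_mid hP hP' hPP
    set dlt := (1/2) * psiF d P b + (1/2) * psiF d P' b' - psiF d Pm bm with hdltdef
    rw [← hPmdef, ← hbmdef] at hpsig
    have hdlt : 0 < dlt := by rw [hdltdef]; linarith
    have hLLmid : ∀ x, llF d Pm bm x
        = (1/2) * llF d P b x + (1/2) * llF d P' b' x + dlt := by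
      intro x
      rw [llF, llF, llF, hPmdef, hbmdef, quad_mid, dot_mid, hdltdef, ← hPmdef, ← hbmdef]
      ring
    -- sums
    have hsum1 : ∀ (m : ℕ) (e : Fin m → Fin d → ℝ),
        ∑ i, mixLogLik Tm (e i)
          = (1/2) * ∑ i, mixLogLik TI (e i) + (1/2) * ∑ i, mixLogLik TA (e i)
            + (m : ℝ) * dlt := by
      intro m e
      have : ∀ i : Fin m, mixLogLik Tm (e i)
          = (1/2) * mixLogLik TI (e i) + (1/2) * mixLogLik TA (e i) + dlt := by
        intro i
        rw [hmlI, hmlA, hmlM, hLLmid]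
      rw [Finset.sum_congr rfl (fun i _ => this i), Finset.sum_add_distrib,
        Finset.sum_add_distrib, ← Finset.mul_sum, ← Finset.mul_sum, Finset.sum_const,
        Finset.card_univ, Fintype.card_fin, nsmul_eq_mul]
    -- objective comparison
    have hobjm := hI Tm hVm
    have hobjA := hI TA hVA
    simp only [gmmObj] at hobjm hobjA
    rw [hsum1 N e1, hsum1 Ns e2] at hobjm
    have hn : (0:ℝ) < (N:ℝ) + (Ns:ℝ) := by
      have : (0:ℝ) < ((N + Ns : ℕ) : ℝ) := Nat.cast_pos.mpr hNNs
      push_cast at this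
      linarith
    simp only [gmmObj] at hA
    nlinarith [hobjm, hA, mul_pos (mul_pos hc hdlt) hn]

section Blowup

lemma smul_one_posDef {d : ℕ} {ε : ℝ} (hε : 0 < ε) :
    (ε • (1 : Matrix (Fin d) (Fin d) ℝ)).PosDef := by
  have h : ε • (1 : Matrix (Fin d) (Fin d) ℝ) = Matrix.diagonal (fun _ => ε) := by
    ext i j
    simp only [Matrix.smul_apply, Matrix.one_apply, Matrix.diagonal_apply, smul_eq_mul]
    split_ifs <;> simp
  rw [h]
  exact Matrix.posDef_diagonal_iff.mpr fun _ => hε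

lemma gaussPdf_at_mean {d : ℕ} (m : Fin d → ℝ) (S : Matrix (Fin d) (Fin d) ℝ) :
    gaussPdf d m S m = 1 / ((2 * Real.pi) ^ ((d : ℝ) / 2) * Real.sqrt S.det) := by
  rw [gaussPdf, sub_self, mulVec_zero, dotProduct_zero, mul_zero, Real.exp_zero]

lemma no_max_K2 {d K N Ns : ℕ} (hd : 0 < d) (hK : 2 ≤ K) (hN : 0 < N)
    (c : ℝ) (hc : 0 < c)
    (e1 : Fin N → Fin d → ℝ) (e2 : Fin Ns → Fin d → ℝ) (M : ℝ)
    (hI : ∀ Θ : GMMParams d K, Θ.Valid → gmmObj e1 e2 c c Θ ≤ M) : False := by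
  classical
  set i0 : Fin N := ⟨0, hN⟩ with hi0
  set x0 : Fin d → ℝ := e1 i0 with hx0
  set k0 : Fin K := ⟨0, by omega⟩ with hk0
  set k1 : Fin K := ⟨1, by omega⟩ with hk1
  have hk01 : k1 ≠ k0 := by simp [hk0, hk1, Fin.ext_iff]
  -- constants
  set g : (Fin d → ℝ) → ℝ := fun x => Real.log (1/2 * gaussPdf d 0 1 x) with hg
  set G1 : ℝ := ∑ i ∈ Finset.univ.erase i0, g (e1 i) with hG1
  set G2 : ℝ := ∑ j, g (e2 j) with hG2
  set C : ℝ := c * ((Real.log (1/2) - ((d:ℝ)/2) * Real.log (2*Real.pi)) + G1) + c * G2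
    with hC
  set t : ℝ := (C - M - 1) / (c * (d:ℝ) / 2) with ht
  set ε : ℝ := Real.exp t with hε
  have hεpos : 0 < ε := Real.exp_pos t
  have hεlog : Real.log ε = t := Real.log_exp t
  -- the mixture
  set Θ : GMMParams d K := ⟨fun k => (if k = k0 then (1/2:ℝ) else 0) + (if k = k1 then (1/2:ℝ) else 0),
    fun k => if k = k0 then x0 else 0,
    fun k => if k = k0 then ε • 1 else 1⟩ with hΘ
  have hcovpd : ∀ k, (Θ.cov k).PosDef := by
    intro k
    simp only [hΘ]
    split_ifs
    · exact smul_one_posDef hεpos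
    · exact Matrix.PosDef.one
  have hV : Θ.Valid := by
    refine ⟨fun k => ?_, ?_, hcovpd⟩
    · simp only [hΘ]
      split_ifs <;> norm_num
    · simp only [hΘ]
      rw [Finset.sum_add_distrib, Finset.sum_ite_eq' Finset.univ k0 (fun _ => (1/2:ℝ)),
        Finset.sum_ite_eq' Finset.univ k1 (fun _ => (1/2:ℝ))]
      norm_num
  -- the per-point likelihood
  have hml : ∀ x, mixLogLik Θ x
      = Real.log (1/2 * gaussPdf d x0 (ε • 1) x + 1/2 * gaussPdf d 0 1 x) := by
    intro x
    rw [mixLogLik]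
    congr 1
    have hterm : ∀ k : Fin K, Θ.pi' k * gaussPdf d (Θ.mu k) (Θ.cov k) x
        = (if k = k0 then (1/2) * gaussPdf d x0 (ε • 1) x else 0)
          + (if k = k1 then (1/2) * gaussPdf d 0 1 x else 0) := by
      intro k
      simp only [hΘ]
      split_ifs with h1 h2
      · exact absurd (h2.symm.trans h1) hk01
      · ring
      · ring
      · ring
    rw [Finset.sum_congr rfl (fun k _ => hterm k), Finset.sum_add_distrib,
      Finset.sum_ite_eq' Finset.univ k0, Finset.sum_ite_eq' Finset.univ k1]
    simp
  -- lower bounds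
  have hgpos : ∀ x, 0 < 1/2 * gaussPdf d 0 1 x := by
    intro x
    have := gaussPdf_pos (Matrix.PosDef.one) x (mu := (0 : Fin d → ℝ))
    linarith
  have hb1 : ∀ x, g x ≤ mixLogLik Θ x := by
    intro x
    rw [hml x, hg]
    apply Real.log_le_log (hgpos x)
    have := gaussPdf_pos (smul_one_posDef hεpos (d := d)) x (mu := x0)
    linarith
  have hb0 : Real.log (1/2) - ((d:ℝ)/2) * Real.log (2*Real.pi) - c⁻¹ * (C - M - 1)
      ≤ mixLogLik Θ x0 := by
    have hpdf0 : gaussPdf d x0 (ε • 1) x0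
        = 1 / ((2 * Real.pi) ^ ((d : ℝ) / 2) * Real.sqrt (ε ^ d)) := by
      rw [gaussPdf_at_mean, det_smul, det_one, mul_one, Fintype.card_fin]
    have h2pi : (0:ℝ) < (2 * Real.pi) ^ ((d : ℝ) / 2) :=
      Real.rpow_pos_of_pos (by positivity) _
    have hsq : Real.sqrt (ε ^ d) > 0 := Real.sqrt_pos.mpr (by positivity)
    have hlog0 : Real.log (1/2 * gaussPdf d x0 (ε • 1) x0)
        = Real.log (1/2) - ((d:ℝ)/2) * Real.log (2*Real.pi) - ((d:ℝ)/2) * t := by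
      rw [hpdf0, mul_one_div, Real.log_div (by norm_num) (by positivity),
        Real.log_mul h2pi.ne' hsq.ne', Real.log_rpow (by positivity),
        Real.log_sqrt (by positivity), Real.log_pow, hεlog]
      push_cast
      ring
    have hct : ((d:ℝ)/2) * t = c⁻¹ * (C - M - 1) := by
      rw [ht]
      have hcd : c * (d:ℝ) / 2 ≠ 0 := by
        have : (0:ℝ) < (d:ℝ) := Nat.cast_pos.mpr hd
        positivity
      field_simp
    rw [hml x0]
    calc Real.log (1/2) - ((d:ℝ)/2) * Real.log (2*Real.pi) - c⁻¹ * (C - M - 1)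
        = Real.log (1/2 * gaussPdf d x0 (ε • 1) x0) := by rw [hlog0, hct]
      _ ≤ _ := by
          have hp := gaussPdf_pos (smul_one_posDef hεpos) x0 (mu := x0)
          apply Real.log_le_log (by linarith)
          linarith [hgpos x0]
  exfalso
  have hobj := hI Θ hV
  rw [gmmObj] at hobj
  -- bound the sums from below
  have hsum1 : (Real.log (1/2) - ((d:ℝ)/2) * Real.log (2*Real.pi) - c⁻¹ * (C - M - 1)) + G1
      ≤ ∑ i, mixLogLik Θ (e1 i) := by
    rw [← Finset.add_sum_erase Finset.univ (fun i => mixLogLik Θ (e1 i)) (Finset.mem_univ i0)]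
    apply add_le_add hb0
    rw [hG1]
    exact Finset.sum_le_sum fun i _ => hb1 (e1 i)
  have hsum2 : G2 ≤ ∑ j, mixLogLik Θ (e2 j) := by
    rw [hG2]
    exact Finset.sum_le_sum fun j _ => hb1 (e2 j)
  have hfinal : M + 1 ≤ gmmObj e1 e2 c c Θ := by
    rw [gmmObj]
    have h1 := mul_le_mul_of_nonneg_left hsum1 hc.le
    have h2 := mul_le_mul_of_nonneg_left hsum2 hc.le
    have hD : c * (c⁻¹ * (C - M - 1)) = C - M - 1 := by field_simp
    have hCdef : C = c * ((Real.log (1/2) - ((d:ℝ)/2) * Real.log (2*Real.pi)) + G1) + c * G2 :=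
      hC
    linarith [h1, h2, hD]
  linarith [hI Θ hV, hfinal]

end Blowup

lemma gaussPdf_dzero (mu : Fin 0 → ℝ) (S : Matrix (Fin 0) (Fin 0) ℝ) (x : Fin 0 → ℝ) :
    gaussPdf 0 mu S x = 1 := by
  rw [gaussPdf]
  simp [Matrix.det_isEmpty]

lemma mixLogLik_dzero {K : ℕ} {Θ : GMMParams 0 K} (hV : Θ.Valid) (x : Fin 0 → ℝ) :
    mixLogLik Θ x = 0 := by
  rw [mixLogLik]
  have : ∑ k, Θ.pi' k * gaussPdf 0 (Θ.mu k) (Θ.cov k) x = ∑ k, Θ.pi' k := by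
    apply Finset.sum_congr rfl
    intro k _
    rw [gaussPdf_dzero, mul_one]
  rw [this, hV.2.1, Real.log_one]


/-- Ordering of GMM solutions under the identical, attention-based, and
ground-truth weighting schemes, evaluated at the ground-truth weights. -/
theorem stmt_9 (d K N Ns : ℕ) (hN : 0 < N) (hNs : 0 < Ns)
    (e1 : Fin N → Fin d → ℝ) (e2 : Fin Ns → Fin d → ℝ)
    (lam1 lam2 : ℝ)
    (hlam1l : 1 / ((N : ℝ) + Ns) ≤ lam1) (hlam1u : lam1 ≤ 1 / (N : ℝ))
    (hlam2l : 0 < lam2) (hlam2u : lam2 ≤ 1 / ((N : ℝ) + Ns))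
    (hsum : (N : ℝ) * lam1 + (Ns : ℝ) * lam2 = 1)
    (ThetaI ThetaG ThetaA : GMMParams d K)
    (hVI : ThetaI.Valid) (hVG : ThetaG.Valid) (hVA : ThetaA.Valid)
    (hI : ∀ Θ : GMMParams d K, Θ.Valid →
      gmmObj e1 e2 (1 / ((N : ℝ) + Ns)) (1 / ((N : ℝ) + Ns)) Θ ≤
      gmmObj e1 e2 (1 / ((N : ℝ) + Ns)) (1 / ((N : ℝ) + Ns)) ThetaI)
    (hG : ∀ Θ : GMMParams d K, Θ.Valid →
      gmmObj e1 e2 (1 / (N : ℝ)) 0 Θ ≤ gmmObj e1 e2 (1 / (N : ℝ)) 0 ThetaG)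
    (hA : ∀ Θ : GMMParams d K, Θ.Valid →
      gmmObj e1 e2 lam1 lam2 Θ ≤ gmmObj e1 e2 lam1 lam2 ThetaA) :
    gmmObj e1 e2 (1 / (N : ℝ)) 0 ThetaI ≤ gmmObj e1 e2 (1 / (N : ℝ)) 0 ThetaA ∧
    gmmObj e1 e2 (1 / (N : ℝ)) 0 ThetaA ≤ gmmObj e1 e2 (1 / (N : ℝ)) 0 ThetaG := by
  have hNpos : (0:ℝ) < (N:ℝ) := Nat.cast_pos.mpr hN
  have hn : (0:ℝ) < (N:ℝ) + (Ns:ℝ) := by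
    have := Nat.cast_nonneg (α := ℝ) Ns
    linarith
  have hc : (0:ℝ) < 1 / ((N:ℝ) + Ns) := by positivity
  refine ⟨?_, hG ThetaA hVA⟩
  have hred : ∀ Θ : GMMParams d K, gmmObj e1 e2 (1/(N:ℝ)) 0 Θ
      = (1/(N:ℝ)) * ∑ i, mixLogLik Θ (e1 i) := by
    intro Θ
    rw [gmmObj, zero_mul, add_zero]
  rw [hred, hred]
  have hgoal : ∑ i, mixLogLik ThetaI (e1 i) ≤ ∑ i, mixLogLik ThetaA (e1 i) := by
    rcases eq_or_lt_of_le hlam2u with heq | hlt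
    · -- degenerate case: lam1 = lam2 = 1/(N+Ns)
      have hl1 : lam1 = 1 / ((N:ℝ) + Ns) := by
        rw [heq] at hsum
        have h2 : ((N:ℝ) + Ns) * (1 / ((N:ℝ) + Ns)) = 1 := by field_simp
        have h3 : (N:ℝ) * lam1 = (N:ℝ) * (1 / ((N:ℝ) + Ns)) := by linarith
        exact mul_left_cancel₀ hNpos.ne' h3
      rw [hl1, heq] at hA
      have hAI := hA ThetaI hVI
      have hKcase : K = 0 ∨ K = 1 ∨ 2 ≤ K := by omega
      rcases hKcase with hK | hK | hK
      · subst hK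
        exact absurd hVI.2.1 (by simp)
      · subst hK
        have hml := k1_key (1 / ((N:ℝ) + Ns)) hc (by omega) e1 e2 ThetaI ThetaA hVI hVA hI hAI
        apply le_of_eq
        exact Finset.sum_congr rfl fun i _ => hml (e1 i)
      · rcases Nat.eq_zero_or_pos d with hd | hd
        · subst hd
          apply le_of_eq
          apply Finset.sum_congr rfl
          intro i _
          rw [mixLogLik_dzero hVI, mixLogLik_dzero hVA]
        · exact absurd hI fun h =>
            no_max_K2 hd hK hN _ hc e1 e2 _ h
    · -- non-degenerate case
      have h1 : lam2 < lam1 := lt_of_lt_of_le hlt hlam1l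
      have hAI := hA ThetaI hVI
      have hIA := hI ThetaA hVA
      simp only [gmmObj] at hAI hIA
      set S1I := ∑ i, mixLogLik ThetaI (e1 i) with hS1I
      set S2I := ∑ i, mixLogLik ThetaI (e2 i) with hS2I
      set S1A := ∑ i, mixLogLik ThetaA (e1 i) with hS1A
      set S2A := ∑ i, mixLogLik ThetaA (e2 i) with hS2A
      have hIA' : S1A + S2A ≤ S1I + S2I := by
        have h := le_of_mul_le_mul_left
          (by linarith [hIA] : (1/((N:ℝ)+Ns)) * (S1A + S2A) ≤ (1/((N:ℝ)+Ns)) * (S1I + S2I)) hc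
        exact h
      by_contra hco
      push_neg at hco
      nlinarith [hAI, hIA', mul_pos (sub_pos.mpr h1) (sub_pos.mpr hco), hlam2l]
  have h1N : (0:ℝ) ≤ 1 / (N:ℝ) := by positivity
  exact mul_le_mul_of_nonneg_left hgoal h1N
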